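/- Let A be a real n×n matrix and H a positive definite real symmetric n×n matrix such that H·A is symmetric. Then A is diagonalizable over ℝ. -/

import Mathlib

open Matrix

theorem stmt_5 (n : ℕ) (A H : Matrix (Fin n) (Fin n) ℝ)
    (hH : H.PosDef) (hsym : (H * A)ᵀ = H * A) :
    ∃ (P D : Matrix (Fin n) (Fin n) ℝ), IsUnit P ∧ D.IsDiag ∧ A = P * D * P⁻¹ := by
  open scoped MatrixOrder in
  set S := CFC.sqrt H with hSdef
  open scoped MatrixOrder in
  have hS2 : S * S = H := CFC.sqrt_mul_sqrt_self H hH.posSemidef.nonneg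
  have hSsym : Sᵀ = S := by
    open scoped MatrixOrder in
    have := (nonneg_iff_posSemidef.mp (CFC.sqrt_nonneg H)).isHermitian
    rwa [Matrix.IsHermitian, conjTranspose_eq_transpose_of_trivial] at this
  have hSunit : IsUnit S := by
    rw [Matrix.isUnit_iff_isUnit_det]
    have hdet : S.det * S.det = H.det := by rw [← det_mul, hS2]
    have : H.det ≠ 0 := hH.det_pos.ne'
    exact (isUnit_iff_ne_zero).2 fun h => this (by rw [← hdet, h, mul_zero])
  have hSinv : S * S⁻¹ = 1 := mul_nonsing_inv S ((Matrix.isUnit_iff_isUnit_det S).1 hSunit)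
  have hSinv' : S⁻¹ * S = 1 := nonsing_inv_mul S ((Matrix.isUnit_iff_isUnit_det S).1 hSunit)
  set B := S * A * S⁻¹ with hBdef
  have hBalt : B = S⁻¹ * (H * A) * S⁻¹ := by
    have h : S * A = S⁻¹ * (H * A) := by
      rw [← hS2, mul_assoc, ← mul_assoc S⁻¹, hSinv', one_mul]
    rw [hBdef, h]
  have hBherm : B.IsHermitian := by
    rw [Matrix.IsHermitian, conjTranspose_eq_transpose_of_trivial, hBalt]
    rw [transpose_mul, transpose_mul, hsym, transpose_nonsing_inv, hSsym]
    simp only [mul_assoc]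
  have hspec := hBherm.spectral_theorem
  set U : Matrix (Fin n) (Fin n) ℝ := (hBherm.eigenvectorUnitary : Matrix (Fin n) (Fin n) ℝ) with hU
  have hUU : U * star U = 1 := (Matrix.mem_unitaryGroup_iff).mp hBherm.eigenvectorUnitary.2
  have hUunit : IsUnit U := ⟨⟨U, star U, hUU, (mul_eq_one_comm).mp hUU⟩, rfl⟩
  have hUinv : U⁻¹ = star U := inv_eq_right_inv hUU
  have hdet : IsUnit S.det := (Matrix.isUnit_iff_isUnit_det S).1 hSunit
  refine ⟨S⁻¹ * U, diagonal (RCLike.ofReal ∘ hBherm.eigenvalues),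
    ((Matrix.isUnit_nonsing_inv_iff).2 hSunit).mul hUunit, isDiag_diagonal _, ?_⟩
  have hPinv : (S⁻¹ * U)⁻¹ = star U * S := by
    rw [Matrix.mul_inv_rev, hUinv, nonsing_inv_nonsing_inv S hdet]
  rw [hPinv]
  have hA : A = S⁻¹ * B * S := by
    rw [hBdef, mul_assoc, mul_assoc, hSinv', mul_one, ← mul_assoc, hSinv', one_mul]
  rw [hA]
  conv_lhs => rw [hspec, Unitary.conjStarAlgAut_apply]
  simp only [mul_assoc]
  rfl
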